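/- Let A be a commutative ring, d a natural number, s_0,…,s_d, a_0,…,a_d ∈ A with ∑ a_i s_i = 1, and f := ∑ a_i x_i ∈ A[x_0,…,x_d]. Let R be the degree-zero part of the localization of A[x_0,…,x_d] away from f, with ξ_i ∈ R the class of x_i/f, and let J ⊆ R be the ideal generated by the elements s_j ξ_i − s_i ξ_j for all i, j. Let ev : R → A be the A-algebra homomorphism induced by the evaluation map A[x_0,…,x_d] → A, x_i ↦ s_i (which sends f to 1 and hence factors through the localization at f). Then ev is surjective and its kernel is exactly J; in particular ev induces an isomorphism of A-algebras R/J ≅ A. -/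

import Mathlib

open MvPolynomial HomogeneousLocalization

attribute [local instance] MvPolynomial.gradedAlgebra

noncomputable section

variable {A : Type*} [CommRing A] {d : ℕ}

/-- A linear form `∑ cᵢ xᵢ` is homogeneous of degree `1`. -/
lemma linear_mem_one (c : Fin (d + 1) → A) :
    (∑ i, C (c i) * X i : MvPolynomial (Fin (d + 1)) A) ∈
      homogeneousSubmodule (Fin (d + 1)) A 1 := by
  rw [mem_homogeneousSubmodule]
  apply MvPolynomial.IsHomogeneous.sum
  intro i _
  simpa using (isHomogeneous_C _ (c i)).mul (isHomogeneous_X _ i)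

variable (a : Fin (d + 1) → A)

/-- `Rloc a` is the degree-zero part of the localization of `A[x_0, …, x_d]`
away from the degree-one element `f = ∑ aᵢ xᵢ` (the homogeneous localization at `f`),
where `A[x_0, …, x_d]` is graded by total degree. -/
abbrev Rloc : Type _ := HomogeneousLocalization.Away (homogeneousSubmodule (Fin (d + 1)) A)
    (∑ i, C (a i) * X i)

/-- `ξ a i` is the class of `xᵢ / f` in the homogeneous localization `Rloc a`. -/
def ξ (i : Fin (d + 1)) : Rloc a :=
  HomogeneousLocalization.mk ⟨1, ⟨X i, (mem_homogeneousSubmodule _ _).2 (isHomogeneous_X _ i)⟩,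
    ⟨∑ j, C (a j) * X j, linear_mem_one a⟩, Submonoid.mem_powers _⟩

/-- `Rloc a` is an `A`-algebra, via `c ↦ (c·f)/f`, i.e. the composite of the structure map
`A → A[x_0, …, x_d]`, the projection to the degree-zero component, and the map from the
degree-zero component into the homogeneous localization. -/
instance : Algebra A (Rloc a) :=
  ((fromZeroRingHom _ _).comp ((GradedRing.projZeroRingHom' _).comp
    (algebraMap A (MvPolynomial (Fin (d + 1)) A)))).toAlgebra

variable (s : Fin (d + 1) → A)

/-- `Jid s a` is the localized ideal of the section: the ideal of `Rloc a` generated by the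
elements `sⱼ ξᵢ - sᵢ ξⱼ` for all `0 ≤ i, j ≤ d`. -/
def Jid : Ideal (Rloc a) :=
  Ideal.span (Set.range fun p : Fin (d + 1) × Fin (d + 1) =>
    s p.2 • ξ a p.1 - s p.1 • ξ a p.2)




local notation "fA" => (∑ i, C (a i) * X i : MvPolynomial (Fin (d+1)) A)

lemma eval₂_mul_of_isHomogeneous {S : Type*} [CommRing S] (F : A →+* S)
    {p : MvPolynomial (Fin (d+1)) A} {n : ℕ} (hp : p.IsHomogeneous n)
    (u : S) (y : Fin (d+1) → S) :
    eval₂ F (fun i => u * y i) p = u ^ n * eval₂ F y p := by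
  rw [p.as_sum, eval₂_sum, eval₂_sum, Finset.mul_sum]
  apply Finset.sum_congr rfl
  intro α hα
  have hdeg : ∑ i ∈ α.support, α i = n := by
    have := hp (mem_support_iff.1 hα)
    simpa [Finsupp.weight, Finsupp.linearCombination, Finsupp.sum] using this
  rw [eval₂_monomial, eval₂_monomial, Finsupp.prod, Finsupp.prod]
  have : ∏ i ∈ α.support, (u * y i) ^ α i
      = u ^ n * ∏ i ∈ α.support, (y i) ^ α i := by
    rw [← hdeg, Finset.prod_congr rfl (fun i _ => mul_pow u (y i) (α i)),
      Finset.prod_mul_distrib, Finset.prod_pow_eq_pow_sum]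
  rw [this]; ring

lemma val_algebraMap' (c : A) :
    (algebraMap A (Rloc a) c).val =
      Localization.mk (C c : MvPolynomial (Fin (d+1)) A) 1 := by
  rw [RingHom.algebraMap_toAlgebra]
  show Localization.mk ((GradedRing.projZeroRingHom' (homogeneousSubmodule (Fin (d+1)) A)
    (algebraMap A (MvPolynomial (Fin (d+1)) A) c)).1) 1 = _
  congr 1
  rw [GradedRing.coe_projZeroRingHom'_apply, GradedRing.projZeroRingHom_apply]
  exact DirectSum.decompose_of_mem_same _ ((mem_homogeneousSubmodule _ _).2
    (isHomogeneous_C _ c))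

lemma val_xi (i : Fin (d+1)) :
    (ξ a i).val = Localization.mk (X i) ⟨fA, Submonoid.mem_powers _⟩ := by
  rw [ξ, val_mk]

/-- bridging the two scalar multiplications -/
lemma smul_eq (c : A) (r : Rloc a) :
    c • r = algebraMap A (Rloc a) c * r := by
  apply val_injective
  rw [val_mul, val_algebraMap', val_smul, r.eq_num_div_den, Localization.smul_mk,
    Localization.mk_mul, one_mul]
  congr 1
  rw [smul_eq_C_mul]

lemma val_aeval (q : MvPolynomial (Fin (d+1)) A) :
    (aeval (ξ a) q).val
      = eval₂ ((algebraMap (MvPolynomial (Fin (d+1)) A)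
          (Localization.Away fA)).comp (C : A →+* MvPolynomial (Fin (d+1)) A))
        (fun i => (ξ a i).val) q := by
  rw [show (aeval (ξ a) q).val = algebraMap (Rloc a) (Localization _)
      (aeval (ξ a) q) from rfl, aeval_def, eval₂_comp_left]
  congr 1
  ext c
  rw [RingHom.comp_apply, HomogeneousLocalization.algebraMap_apply, val_algebraMap', RingHom.comp_apply,
    ← Localization.mk_one_eq_algebraMap]

lemma exists_aeval (r : Rloc a) : ∃ q : MvPolynomial (Fin (d+1)) A, aeval (ξ a) q = r := by
  obtain ⟨c, rfl⟩ := mk_surjective r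
  obtain ⟨m, hm⟩ := c.den_mem
  by_cases h0 : (fA : MvPolynomial (Fin (d+1)) A) ^ m = 0
  · have h0' : (0 : MvPolynomial (Fin (d+1)) A) ∈ Submonoid.powers fA := ⟨m, h0⟩
    have : Subsingleton (Rloc a) := HomogeneousLocalization.subsingleton _ h0'
    exact ⟨0, Subsingleton.elim _ _⟩
  · have hpm : (fA) ^ m ∈ homogeneousSubmodule (Fin (d+1)) A m := by
      simpa using SetLike.pow_mem_graded m (linear_mem_one a)
    have hdeg : c.deg = m := by
      refine DirectSum.degree_eq_of_mem_mem (homogeneousSubmodule (Fin (d+1)) A)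
        c.den.2 (hm ▸ hpm) ?_
      rw [← hm]; exact h0
    subst hdeg
    have hnum : (c.num : MvPolynomial (Fin (d+1)) A).IsHomogeneous c.deg :=
      (mem_homogeneousSubmodule _ _).1 c.num.2
    refine ⟨c.num, ?_⟩
    apply val_injective
    rw [val_aeval, val_mk]
    have hxi : ∀ i : Fin (d+1), (ξ a i).val
        = Localization.mk 1 ⟨fA, Submonoid.mem_powers _⟩
          * (algebraMap (MvPolynomial (Fin (d+1)) A) (Localization.Away fA) (X i)) := by
      intro i
      rw [val_xi, ← Localization.mk_one_eq_algebraMap, Localization.mk_mul, one_mul, mul_one]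
    calc eval₂ _ (fun i => (ξ a i).val) (c.num : MvPolynomial (Fin (d+1)) A)
        = eval₂ ((algebraMap (MvPolynomial (Fin (d+1)) A) (Localization.Away fA)).comp C)
            (fun i => Localization.mk 1 ⟨fA, Submonoid.mem_powers _⟩
              * algebraMap (MvPolynomial (Fin (d+1)) A) (Localization.Away fA) (X i))
            (c.num : MvPolynomial (Fin (d+1)) A) := by
          apply eval₂_congr; intros; rw [hxi]
      _ = (Localization.mk 1 ⟨fA, Submonoid.mem_powers _⟩) ^ c.deg
            * algebraMap (MvPolynomial (Fin (d+1)) A) (Localization.Away fA)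
                (c.num : MvPolynomial (Fin (d+1)) A) := by
          rw [eval₂_mul_of_isHomogeneous _ hnum]
          congr 1
          rw [show (fun i => algebraMap (MvPolynomial (Fin (d+1)) A)
              (Localization.Away fA) (X i))
            = (⇑(algebraMap (MvPolynomial (Fin (d+1)) A) (Localization.Away fA)) ∘ X)
            from rfl, ← eval₂_comp_left, eval₂_eta]
      _ = Localization.mk (c.num : MvPolynomial (Fin (d+1)) A) ⟨c.den, c.den_mem⟩ := by
          rw [Localization.mk_pow, one_pow, ← Localization.mk_one_eq_algebraMap,
            Localization.mk_mul, one_mul, mul_one]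
          congr 1
          exact Subtype.ext (by simp [hm])

lemma sum_alg_xi_eq_one :
    (∑ j, algebraMap A (Rloc a) (a j) * ξ a j) = 1 := by
  apply val_injective
  rw [show (∑ j, algebraMap A (Rloc a) (a j) * ξ a j).val
      = algebraMap (Rloc a) (Localization _) (∑ j, algebraMap A (Rloc a) (a j) * ξ a j)
      from rfl, map_sum, val_one]
  have h1 : ∀ j : Fin (d+1),
      algebraMap (Rloc a) (Localization (Submonoid.powers fA))
        (algebraMap A (Rloc a) (a j) * ξ a j)
      = algebraMap (MvPolynomial (Fin (d+1)) A) _ (C (a j) * X j)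
        * Localization.mk 1 ⟨fA, Submonoid.mem_powers _⟩ := by
    intro j
    rw [map_mul, HomogeneousLocalization.algebraMap_apply, HomogeneousLocalization.algebraMap_apply, val_algebraMap', val_xi,
      Localization.mk_mul, one_mul, ← Localization.mk_one_eq_algebraMap,
      Localization.mk_mul, mul_one, one_mul]
  rw [Finset.sum_congr rfl fun j _ => h1 j, ← Finset.sum_mul, ← map_sum,
    ← Localization.mk_one_eq_algebraMap, Localization.mk_mul, mul_one, one_mul]
  exact Localization.mk_self (⟨fA, Submonoid.mem_powers _⟩ : Submonoid.powers fA)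


/-- The `A`-algebra homomorphism `ev : Rloc a → A` induced by the evaluation map
`A[x_0, …, x_d] → A, xᵢ ↦ sᵢ` (i.e. the `A`-algebra map with `ev ξᵢ = sᵢ`) is surjective and
its kernel is exactly `J`; in particular `ev` induces an isomorphism of `A`-algebras
`Rloc a / J ≅ A`. -/
theorem stmt_4 {A : Type*} [CommRing A] (d : ℕ) (s a : Fin (d + 1) → A)
    (h : ∑ i, a i * s i = 1)
    (ev : Rloc a →ₐ[A] A) (hev : ∀ i, ev (ξ a i) = s i) :
    Function.Surjective ev ∧ RingHom.ker ev.toRingHom = Jid a s ∧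
      ∃ e : (Rloc a ⧸ Jid a s) ≃ₐ[A] A,
        ∀ r : Rloc a, e (Ideal.Quotient.mk (Jid a s) r) = ev r := by
  -- ev kills the generators of J
  have hJle : Jid a s ≤ RingHom.ker ev.toRingHom := by
    rw [Jid, Ideal.span_le]
    rintro _ ⟨p, rfl⟩
    rw [SetLike.mem_coe, RingHom.mem_ker]
    show ev _ = 0
    rw [map_sub, smul_eq, smul_eq, map_mul, map_mul, ev.commutes, ev.commutes, hev, hev]
    simp [Algebra.algebraMap_self_apply, mul_comm]
  have hJker : ∀ r ∈ Jid a s, ev r = 0 := fun r hr => hJle hr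
  -- the ξᵢ are congruent to sᵢ mod J
  have hξJ : ∀ i, ξ a i - algebraMap A (Rloc a) (s i) ∈ Jid a s := by
    intro i
    have h1 : (∑ j, algebraMap A (Rloc a) (a j) * (s j • ξ a i - s i • ξ a j))
        = ξ a i - algebraMap A (Rloc a) (s i) := by
      have h2 : ∀ j : Fin (d+1), algebraMap A (Rloc a) (a j) * (s j • ξ a i - s i • ξ a j)
          = (algebraMap A (Rloc a) (a j * s j)) * ξ a i
            - algebraMap A (Rloc a) (s i) * (algebraMap A (Rloc a) (a j) * ξ a j) := by
        intro j
        rw [smul_eq, smul_eq, map_mul]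
        ring
      rw [Finset.sum_congr rfl fun j _ => h2 j, Finset.sum_sub_distrib, ← Finset.sum_mul,
        ← map_sum, ← Finset.mul_sum, sum_alg_xi_eq_one, mul_one, h, map_one, one_mul]
    rw [← h1]
    refine Ideal.sum_mem _ fun j _ => Ideal.mul_mem_left _ _ ?_
    exact Ideal.subset_span ⟨(i, j), rfl⟩
  -- every element is congruent mod J to the image of its evaluation
  have key : ∀ r : Rloc a, r - algebraMap A (Rloc a) (ev r) ∈ Jid a s := by
    intro r
    obtain ⟨q, rfl⟩ := exists_aeval a r
    induction q using MvPolynomial.induction_on with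
    | C c => rw [aeval_C, ev.commutes]; simpa using (Jid a s).zero_mem
    | add p q hp hq =>
        rw [map_add, map_add, map_add]
        have : aeval (ξ a) p + aeval (ξ a) q
            - (algebraMap A (Rloc a) (ev (aeval (ξ a) p)) + algebraMap A (Rloc a) (ev (aeval (ξ a) q)))
            = (aeval (ξ a) p - algebraMap A (Rloc a) (ev (aeval (ξ a) p)))
              + (aeval (ξ a) q - algebraMap A (Rloc a) (ev (aeval (ξ a) q))) := by ring
        rw [this]
        exact add_mem hp hq
    | mul_X p i hp =>
        rw [map_mul, map_mul, aeval_X, hev, map_mul]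
        have : aeval (ξ a) p * ξ a i
            - algebraMap A (Rloc a) (ev (aeval (ξ a) p)) * algebraMap A (Rloc a) (s i)
            = aeval (ξ a) p * (ξ a i - algebraMap A (Rloc a) (s i))
              + algebraMap A (Rloc a) (s i)
                * (aeval (ξ a) p - algebraMap A (Rloc a) (ev (aeval (ξ a) p))) := by ring
        rw [this]
        exact add_mem (Ideal.mul_mem_left _ _ (hξJ i)) (Ideal.mul_mem_left _ _ hp)
  have hker : RingHom.ker ev.toRingHom = Jid a s := by
    ext r
    constructor
    · intro hr
      have hr' : ev r = 0 := hr
      have := key r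
      rwa [hr', map_zero, sub_zero] at this
    · intro hr
      exact hJker r hr
  refine ⟨fun c => ⟨algebraMap A (Rloc a) c, ev.commutes c⟩, hker, ?_⟩
  refine ⟨AlgEquiv.ofBijective (Ideal.Quotient.liftₐ (Jid a s) ev hJker) ⟨?_, ?_⟩, ?_⟩
  · rw [injective_iff_map_eq_zero]
    intro x hx
    obtain ⟨r, rfl⟩ := Ideal.Quotient.mk_surjective x
    rw [Ideal.Quotient.liftₐ_apply] at hx
    have hx' : ev r = 0 := hx
    have := key r
    rw [hx', map_zero, sub_zero] at this
    exact Ideal.Quotient.eq_zero_iff_mem.2 this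
  · intro c
    exact ⟨Ideal.Quotient.mk _ (algebraMap A (Rloc a) c), by
      simp [Ideal.Quotient.liftₐ_apply, ev.commutes]⟩
  · intro r
    rfl


end
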